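/- Let n ≥ 1 and let p be a surjection with domain Fin n. Then the sum, over all surjections o with domain Fin n that refine p, of (−1)^{k(o)}, equals (−1)^n. (This is the Euler–Poincaré relation for the face of the permutahedron corresponding to p: the faces of the n-permutahedron contained in the face of p correspond to the surjections refining p, a surjection onto Fin k corresponding to a face of dimension n − k.) -/

import Mathlib

open scoped Classical

/-- A surjection of size `n`: a surjective function from `Fin n` onto some `Fin k`. -/
abbrev Surjs (n : ℕ) : Type :=
  {o : Σ k : Fin (n + 1), Fin n → Fin (k : ℕ) // Function.Surjective o.2}

namespace Surjs

variable {n : ℕ}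

/-- The size `k(o)` of the image of the surjection. -/
def k (o : Surjs n) : ℕ := (o.1.1 : ℕ)

/-- The underlying function of the surjection. -/
def f (o : Surjs n) : Fin n → Fin o.k := o.1.2

/-- `o` refines `p` if `o x ≤ o y` implies `p x ≤ p y` for all `x, y`. -/
def Refines (o p : Surjs n) : Prop :=
  ∀ x y : Fin n, o.f x ≤ o.f y → p.f x ≤ p.f y

end Surjs

namespace EP

def DC {n : ℕ} (f : Fin n → ℕ) : Prop := ∀ x : Fin n, ∀ j, j < f x → ∃ y, f y = j
def Ref {n : ℕ} (f g : Fin n → ℕ) : Prop := ∀ x y, f x ≤ f y → g x ≤ g y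

lemma DC.lt {n : ℕ} {f : Fin n → ℕ} (h : DC f) (x : Fin n) : f x < n := by
  have hsub : Finset.range (f x + 1) ⊆ Finset.univ.image f := by
    intro j hj
    simp only [Finset.mem_range, Nat.lt_succ_iff] at hj
    rcases lt_or_eq_of_le hj with hj | hj
    · obtain ⟨y, hy⟩ := h x j hj
      exact Finset.mem_image.2 ⟨y, Finset.mem_univ y, hy⟩
    · exact Finset.mem_image.2 ⟨x, Finset.mem_univ x, hj.symm⟩
  have h1 := Finset.card_le_card hsub
  simp only [Finset.card_range] at h1
  have h2 := Finset.card_image_le (s := (Finset.univ : Finset (Fin n))) (f := f)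
  simp only [Finset.card_univ, Fintype.card_fin] at h2
  omega

lemma DC.mem_piFinset {n : ℕ} {f : Fin n → ℕ} (h : DC f) :
    f ∈ Fintype.piFinset (fun _ : Fin n => Finset.range n) := by
  simp only [Fintype.mem_piFinset, Finset.mem_range]
  exact h.lt

lemma exists_sup {n : ℕ} (hn : 1 ≤ n) (f : Fin n → ℕ) :
    ∃ y : Fin n, f y = Finset.univ.sup f := by
  have : (Finset.univ : Finset (Fin n)).Nonempty := Finset.univ_nonempty_iff.2 ⟨⟨0, hn⟩⟩
  obtain ⟨b, _, hb⟩ := Finset.exists_mem_eq_sup Finset.univ this f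
  exact ⟨b, hb.symm⟩

variable {m : ℕ}

/-- block of 0 is a singleton -/
def Sing (f : Fin (m+1) → ℕ) : Prop := ∀ x, f x = f 0 → x = 0
/-- block of 0 is the first of its g-group -/
def Fst (f g : Fin (m+1) → ℕ) : Prop := ∀ y, f y < f 0 → g y < g 0

noncomputable def T (f : Fin (m+1) → ℕ) : Fin (m+1) → ℕ :=
  fun x => if x = 0 then f 0 + 1 else if f 0 < f x then f x + 1 else f x

noncomputable def M (f : Fin (m+1) → ℕ) : Fin (m+1) → ℕ :=
  fun x => if f 0 ≤ f x then f x - 1 else f x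

section split
variable {f g : Fin (m+1) → ℕ} (hdc : DC f) (href : Ref f g)
  (hns : ¬ Sing f)

include hns in
lemma not_sing : ∃ z, z ≠ 0 ∧ f z = f 0 := by
  simp only [Sing, not_forall] at hns
  obtain ⟨z, hz, hz0⟩ := hns
  exact ⟨z, hz0, hz⟩

include hdc hns in
lemma T_dc : DC (T f) := by
  obtain ⟨z, hz0, hz⟩ := not_sing hns
  intro x i hi
  by_cases hij : i = f 0
  · subst hij; exact ⟨z, by simp [T, hz0, hz]⟩
  by_cases hij' : i < f 0
  · obtain ⟨y, hy⟩ := hdc 0 i hij'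
    have hy0 : y ≠ 0 := by rintro rfl; omega
    exact ⟨y, by simp [T, hy0, hy]; omega⟩
  · -- i > f 0
    have hif : f 0 < i := by omega
    by_cases hij2 : i = f 0 + 1
    · exact ⟨0, by simp [T, hij2]⟩
    · -- i ≥ f 0 + 2; witness y with f y = i - 1
      have hx0 : x ≠ 0 := by
        rintro rfl; simp [T] at hi; omega
      simp only [T, hx0, if_false] at hi
      have hfx : i - 1 < f x := by by_cases h : f 0 < f x <;> simp [h] at hi <;> omega
      obtain ⟨y, hy⟩ := hdc x (i-1) hfx
      have hy0 : y ≠ 0 := by rintro rfl; omega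
      have hylt : f 0 < f y := by omega
      exact ⟨y, by simp [T, hy0, hylt]; omega⟩

include href in
lemma T_ref : Ref (T f) g := by
  intro x y hxy
  by_cases hx : x = 0 <;> by_cases hy : y = 0
  · subst hx hy; exact le_refl _
  · subst hx
    simp only [T, if_pos rfl, hy, if_false] at hxy
    have : f 0 ≤ f y := by by_cases h : f 0 < f y <;> simp [h] at hxy <;> omega
    exact href 0 y this
  · subst hy
    simp only [T, hx, if_false, if_pos rfl] at hxy
    have : f x ≤ f 0 := by by_cases h : f 0 < f x <;> simp [h] at hxy <;> omega
    exact href x 0 this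
  · simp only [T, hx, hy, if_false] at hxy
    have : f x ≤ f y := by
      by_cases h1 : f 0 < f x <;> by_cases h2 : f 0 < f y <;> simp [h1, h2] at hxy <;> omega
    exact href x y this

lemma T_sing : Sing (T f) := by
  intro x hx
  by_contra hx0
  simp only [T, if_pos rfl, hx0, if_false] at hx
  by_cases h : f 0 < f x <;> simp [h] at hx <;> omega

include href hns in
lemma T_not_fst : ¬ Fst (T f) g := by
  obtain ⟨z, hz0, hz⟩ := not_sing hns
  intro hfst
  have h1 : T f z < T f 0 := by simp [T, hz0, hz]
  have := hfst z h1
  have h2 : g z ≤ g 0 := href z 0 (le_of_eq hz)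
  have h3 : g 0 ≤ g z := href 0 z (le_of_eq hz.symm)
  omega

lemma M_T : M (T f) = f := by
  funext x
  by_cases hx : x = 0
  · subst hx; simp [M, T]
  · simp only [M, T, if_pos rfl, hx, if_false]
    by_cases h : f 0 < f x <;> simp [h] <;> omega

lemma T_sup (hm : 1 ≤ m + 1) : Finset.univ.sup (T f) = Finset.univ.sup f + 1 := by
  apply le_antisymm
  · apply Finset.sup_le
    intro x _
    have := Finset.le_sup (f := f) (Finset.mem_univ x)
    have h0 := Finset.le_sup (f := f) (Finset.mem_univ (0 : Fin (m+1)))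
    by_cases hx : x = 0
    · subst hx; simp [T]; omega
    · simp only [T, hx, if_false]
      by_cases h : f 0 < f x <;> simp [h] <;> omega
  · obtain ⟨y, hy⟩ := exists_sup hm f
    have h0 := Finset.le_sup (f := f) (Finset.mem_univ (0 : Fin (m+1)))
    by_cases hyf : f 0 < f y
    · have hy0 : y ≠ 0 := by rintro rfl; omega
      have : T f y = f y + 1 := by simp [T, hy0, hyf]
      calc Finset.univ.sup f + 1 = T f y := by rw [this, hy]
      _ ≤ _ := Finset.le_sup (Finset.mem_univ y)
    · have hsup : Finset.univ.sup f = f 0 := by omega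
      have : T f 0 = f 0 + 1 := by simp [T]
      calc Finset.univ.sup f + 1 = T f 0 := by rw [this, hsup]
      _ ≤ _ := Finset.le_sup (Finset.mem_univ 0)

end split

end EP

namespace EP

section merge
variable {m : ℕ} {f g : Fin (m+1) → ℕ} (hdc : DC f) (href : Ref f g)
  (hsing : Sing f) (hnf : ¬ Fst f g)

include hnf in
lemma not_fst : ∃ z, f z < f 0 ∧ ¬ g z < g 0 := by
  simp only [Fst, not_forall] at hnf
  obtain ⟨z, hz1, hz2⟩ := hnf
  exact ⟨z, hz1, hz2⟩

include hdc href hnf in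
lemma prev_block : f 0 ≠ 0 ∧ ∃ z, f z = f 0 - 1 ∧ g z = g 0 := by
  obtain ⟨z, hz1, hz2⟩ := not_fst hnf
  have h0 : f 0 ≠ 0 := by omega
  obtain ⟨z', hz'⟩ := hdc 0 (f 0 - 1) (by omega)
  have h1 : g z' ≤ g 0 := href z' 0 (by omega)
  have h2 : g z ≤ g z' := href z z' (by omega)
  have h3 : g z ≤ g 0 := href z 0 (by omega)
  exact ⟨h0, z', hz', by omega⟩

include hdc in
omit hsing in
lemma M_dc : DC (M f) := by
  intro x i hi
  by_cases hix : f 0 ≤ f x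
  · simp only [M, if_pos hix] at hi
    by_cases hij : i < f 0
    · obtain ⟨y, hy⟩ := hdc x i (by omega)
      exact ⟨y, by simp [M, hy]; omega⟩
    · -- i ≥ f 0, use i+1
      obtain ⟨y, hy⟩ := hdc x (i+1) (by omega)
      exact ⟨y, by simp [M, hy]; omega⟩
  · simp only [M, if_neg hix] at hi
    obtain ⟨y, hy⟩ := hdc x i (by omega)
    exact ⟨y, by simp [M, hy]; omega⟩

include hdc href hsing hnf in
lemma M_ref : Ref (M f) g := by
  obtain ⟨h00, z', hz'1, hz'2⟩ := prev_block hdc href hnf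
  intro x y hxy
  by_cases hx : f 0 ≤ f x <;> by_cases hy : f 0 ≤ f y <;>
    simp only [M, hx, hy, if_pos, if_neg, if_true, if_false] at hxy
  · exact href x y (by omega)
  · -- f x ≥ f 0 > f y, M f x = f x - 1 ≤ f y
    -- then f x - 1 ≤ f y ≤ f 0 - 1 ≤ f x - 1, so f x = f 0, x = 0, f y = f 0 - 1
    have hfx : f x = f 0 := by
      by_contra hne
      have : f 0 < f x := by omega
      omega
    have hx0 : x = 0 := hsing x hfx
    subst hx0
    have hfy : f y = f 0 - 1 := by omega
    have : g z' ≤ g y := href z' y (by omega)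
    omega
  · exact href x y (by omega)
  · exact href x y (by omega)

include hdc href hsing hnf in
lemma M_not_sing : ¬ Sing (M f) := by
  obtain ⟨h00, z', hz'1, hz'2⟩ := prev_block hdc href hnf
  intro hs
  have hz0 : z' ≠ 0 := by
    rintro rfl; omega
  have h1 : M f z' = M f 0 := by
    have hlt : ¬ f 0 ≤ f z' := by omega
    simp [M, hlt]; omega
  exact hz0 (hs z' h1)

include hdc href hsing hnf in
lemma T_M : T (M f) = f := by
  obtain ⟨h00, _⟩ := prev_block hdc href hnf
  have hM0 : M f 0 = f 0 - 1 := by simp [M]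
  funext x
  by_cases hx : x = 0
  · subst hx; simp [T, hM0]; omega
  · have hfx : f x ≠ f 0 := fun h => hx (hsing x h)
    simp only [T, hx, if_false, hM0]
    by_cases h : f 0 ≤ f x
    · have : f 0 - 1 < M f x := by simp [M, h]; omega
      simp only [if_pos this]; simp [M, h]; omega
    · have : ¬ f 0 - 1 < M f x := by simp [M, h]; omega
      simp only [if_neg this]; simp [M, h]

include hdc href hsing hnf in
lemma M_sup : Finset.univ.sup (M f) + 1 = Finset.univ.sup f := by
  obtain ⟨h00, _⟩ := prev_block hdc href hnf
  obtain ⟨y, hy⟩ := exists_sup (Nat.le_add_left 1 m) f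
  have h0 := Finset.le_sup (f := f) (Finset.mem_univ (0 : Fin (m+1)))
  apply le_antisymm
  · have : ∀ x, M f x ≤ Finset.univ.sup f - 1 := by
      intro x
      have := Finset.le_sup (f := f) (Finset.mem_univ x)
      by_cases h : f 0 ≤ f x <;> simp [M, h] <;> omega
    have := Finset.sup_le (fun x (_ : x ∈ Finset.univ) => this x)
    omega
  · have hle : f 0 ≤ f y := by omega
    have : M f y = Finset.univ.sup f - 1 := by simp [M, hle]; omega
    have h2 := Finset.le_sup (f := M f) (Finset.mem_univ y)
    omega

end merge
end EP

namespace EP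
set_option linter.unusedSectionVars false

lemma dclosed_eq_range {s : Finset ℕ} (h : ∀ a ∈ s, ∀ b < a, b ∈ s) :
    s = Finset.range s.card := by
  have key : ∀ k, k ∈ s ↔ k < s.card := by
    intro k
    constructor
    · intro hk
      have hsub : Finset.range (k+1) ⊆ s := by
        intro b hb
        simp only [Finset.mem_range, Nat.lt_succ_iff] at hb
        rcases lt_or_eq_of_le hb with hb | hb
        · exact h k hk b hb
        · exact hb ▸ hk
      have := Finset.card_le_card hsub
      simp only [Finset.card_range] at this
      omega
    · intro hk
      by_contra hks
      have hsub : s ⊆ Finset.range k := by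
        intro a ha
        simp only [Finset.mem_range]
        by_contra hak
        rcases lt_or_eq_of_le (not_lt.1 hak) with h' | h'
        · exact hks (h a ha k h')
        · exact hks (h' ▸ ha)
      have := Finset.card_le_card hsub
      simp only [Finset.card_range] at this
      omega
  ext k
  simp [key, Finset.mem_range]

section fixedbij
variable {m : ℕ} (g : Fin (m+1) → ℕ)

noncomputable def D (f : Fin (m+1) → ℕ) : Fin m → ℕ :=
  fun y => if f 0 < f y.succ then f y.succ - 1 else f y.succ

noncomputable def jval (f' : Fin m → ℕ) : ℕ :=
  ((Finset.univ.filter (fun y : Fin m => g y.succ < g 0)).image f').card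

noncomputable def U (f' : Fin m → ℕ) : Fin (m+1) → ℕ :=
  fun x => if h : x = 0 then jval g f'
    else if jval g f' ≤ f' (x.pred h) then f' (x.pred h) + 1 else f' (x.pred h)

variable {g}

/-- general: jval satisfies the "position" property when f' is good -/
lemma jval_pj {f' : Fin m → ℕ} (hdc : DC f') (href : Ref f' (fun y => g y.succ)) :
    ∀ y, (g y.succ < g 0 ↔ f' y < jval g f') := by
  classical
  set A := Finset.univ.filter (fun y : Fin m => g y.succ < g 0) with hA
  set I := A.image f' with hI
  have hdcl : ∀ a ∈ I, ∀ b < a, b ∈ I := by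
    intro a ha b hb
    simp only [hI, Finset.mem_image] at ha ⊢
    obtain ⟨y, hyA, hya⟩ := ha
    obtain ⟨z, hz⟩ := hdc y b (by omega)
    refine ⟨z, ?_, hz⟩
    simp only [hA, Finset.mem_filter, Finset.mem_univ, true_and] at hyA ⊢
    have h2 := href z y (by omega)
    dsimp only at h2
    omega
  have hrange : I = Finset.range (jval g f') := dclosed_eq_range hdcl
  intro y
  constructor
  · intro hy
    have : f' y ∈ I := Finset.mem_image.2 ⟨y, by simp [hA, hy], rfl⟩
    rw [hrange] at this
    simpa using this
  · intro hy
    have : f' y ∈ I := by rw [hrange]; simpa using hy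
    simp only [hI, Finset.mem_image] at this
    obtain ⟨y', hy'A, hy'⟩ := this
    simp only [hA, Finset.mem_filter, Finset.mem_univ, true_and] at hy'A
    have h2 := href y y' (le_of_eq hy'.symm)
    dsimp only at h2
    omega

/-- if PJ holds with some value j and all i < j are attained, then jval = j -/
lemma jval_eq {f' : Fin m → ℕ} {j : ℕ} (hpj : ∀ y, (g y.succ < g 0 ↔ f' y < j))
    (hj : ∀ i, i < j → ∃ y, f' y = i) : jval g f' = j := by
  classical
  have : (Finset.univ.filter (fun y : Fin m => g y.succ < g 0)).image f' = Finset.range j := by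
    ext a
    simp only [Finset.mem_image, Finset.mem_filter, Finset.mem_univ, true_and, Finset.mem_range]
    constructor
    · rintro ⟨y, hy, rfl⟩; exact (hpj y).1 hy
    · intro ha
      obtain ⟨y, hy⟩ := hj a ha
      exact ⟨y, (hpj y).2 (by omega), hy⟩
  rw [jval, this, Finset.card_range]

end fixedbij
end EP

namespace EP
set_option linter.unusedSectionVars false

section Dlemmas
variable {m : ℕ} {f g : Fin (m+1) → ℕ} (hdc : DC f) (href : Ref f g)
  (hsing : Sing f) (hfst : Fst f g)

include hsing in
lemma sing_ne (y : Fin m) : f y.succ ≠ f 0 := by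
  intro h
  exact Fin.succ_ne_zero y (hsing _ h)

include hdc hsing in
lemma D_dc : DC (D f) := by
  intro y i hi
  have hv := sing_ne hsing y
  by_cases hif : i < f 0
  · obtain ⟨z, hz⟩ := hdc 0 i hif
    have hz0 : z ≠ 0 := by rintro rfl; omega
    refine ⟨z.pred hz0, ?_⟩
    simp only [D, Fin.succ_pred]
    split_ifs <;> omega
  · have hvgt : f 0 < f y.succ := by
      by_contra h
      simp only [D, if_neg (by omega : ¬ f 0 < f y.succ)] at hi
      omega
    simp only [D, if_pos hvgt] at hi
    obtain ⟨z, hz⟩ := hdc y.succ (i+1) (by omega)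
    have hz0 : z ≠ 0 := by rintro rfl; omega
    refine ⟨z.pred hz0, ?_⟩
    simp only [D, Fin.succ_pred]
    split_ifs <;> omega

include href hsing in
lemma D_ref : Ref (D f) (fun y => g y.succ) := by
  intro a b hab
  have ha := sing_ne hsing a
  have hb := sing_ne hsing b
  have : f a.succ ≤ f b.succ := by
    simp only [D] at hab
    by_cases h1 : f 0 < f a.succ <;> by_cases h2 : f 0 < f b.succ <;>
      simp only [h1, h2, if_true, if_false, if_pos, if_neg] at hab <;> omega
  exact href _ _ this

include hdc hsing in
lemma D_sup (hm : 1 ≤ m) : Finset.univ.sup (D f) + 1 = Finset.univ.sup f := by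
  set s := Finset.univ.sup f with hs
  have h0 := Finset.le_sup (f := f) (Finset.mem_univ (0 : Fin (m+1)))
  have hx1 : f (Fin.succ ⟨0, hm⟩) ≠ f 0 := sing_ne hsing ⟨0, hm⟩
  have hx1s := Finset.le_sup (f := f) (Finset.mem_univ (Fin.succ (⟨0, hm⟩ : Fin m)))
  have hs1 : 1 ≤ s := by omega
  apply le_antisymm
  · have hb : ∀ y : Fin m, D f y ≤ s - 1 := by
      intro y
      have := Finset.le_sup (f := f) (Finset.mem_univ y.succ)
      have := sing_ne hsing y
      by_cases h : f 0 < f y.succ <;> simp [D, h] <;> omega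
    have := Finset.sup_le (fun x (_ : x ∈ Finset.univ) => hb x)
    omega
  · obtain ⟨z, hz⟩ := exists_sup (by omega) f
    rcases eq_or_ne z 0 with rfl | hz0
    · -- s = f 0
      obtain ⟨z', hz'⟩ := hdc 0 (f 0 - 1) (by omega)
      have hz'0 : z' ≠ 0 := by rintro rfl; omega
      have : D f (z'.pred hz'0) = s - 1 := by
        simp only [D, Fin.succ_pred]
        split_ifs <;> omega
      have := this ▸ Finset.le_sup (f := D f) (Finset.mem_univ (z'.pred hz'0))
      omega
    · have hzgt : f 0 < f z := by
        have := sing_ne hsing (z.pred hz0)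
        simp only [Fin.succ_pred] at this
        omega
      have : D f (z.pred hz0) = s - 1 := by
        simp only [D, Fin.succ_pred]
        split_ifs <;> omega
      have := this ▸ Finset.le_sup (f := D f) (Finset.mem_univ (z.pred hz0))
      omega

include hdc href hsing hfst in
lemma jval_D : jval g (D f) = f 0 := by
  apply jval_eq
  · intro y
    have hv := sing_ne hsing y
    constructor
    · intro hy
      have hlt : f y.succ < f 0 := by
        by_contra h
        have := href 0 y.succ (by omega)
        omega
      simp only [D, if_neg (by omega : ¬ f 0 < f y.succ)]
      omega
    · intro hy
      by_cases h : f 0 < f y.succ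
      · simp only [D, if_pos h] at hy; omega
      · simp only [D, if_neg h] at hy
        exact hfst y.succ (by omega)
  · intro i hi
    obtain ⟨z, hz⟩ := hdc 0 i hi
    have hz0 : z ≠ 0 := by rintro rfl; omega
    refine ⟨z.pred hz0, ?_⟩
    simp only [D, Fin.succ_pred]
    split_ifs <;> omega

include hdc href hsing hfst in
lemma U_D : U g (D f) = f := by
  have hj := jval_D hdc href hsing hfst
  funext x
  rcases eq_or_ne x 0 with rfl | hx0
  · simp [U, hj]
  · have hv := sing_ne hsing (x.pred hx0)
    simp only [Fin.succ_pred] at hv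
    simp only [U, dif_neg hx0, hj]
    by_cases h : f 0 < f x
    · have : D f (x.pred hx0) = f x - 1 := by simp only [D, Fin.succ_pred, if_pos h]
      rw [this, if_pos (by omega)]; omega
    · have : D f (x.pred hx0) = f x := by simp only [D, Fin.succ_pred, if_neg h]
      rw [this, if_neg (by omega)]

end Dlemmas
end EP

namespace EP
set_option linter.unusedSectionVars false

section Ulemmas
variable {m : ℕ} {g : Fin (m+1) → ℕ} {f' : Fin m → ℕ}
  (hdc : DC f') (href : Ref f' (fun y => g y.succ))

include hdc href in
lemma jval_attained : ∀ i < jval g f', ∃ y, f' y = i ∧ g y.succ < g 0 := by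
  intro i hi
  obtain ⟨z, hz⟩ : ∃ z, f' z = i := by
    by_contra h
    push_neg at h
    -- i not in image, but i < jval = card of subimage
    have hsub : (Finset.univ.filter (fun y : Fin m => g y.succ < g 0)).image f' ⊆
        Finset.univ.image f' := Finset.image_subset_image (Finset.filter_subset _ _)
    have hpj := jval_pj hdc href
    -- jval ≤ ... get contradiction via pj: find y with f' y = i
    -- use downward closedness: jval > i means some y has f' y ≥ ... 
    -- simpler: jval = card img ≥ i+1 means exists elt = i? use dclosed_eq_range on subimage
    have hdcl : ∀ a ∈ (Finset.univ.filter (fun y : Fin m => g y.succ < g 0)).image f',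
        ∀ b < a, b ∈ (Finset.univ.filter (fun y : Fin m => g y.succ < g 0)).image f' := by
      intro a ha b hb
      simp only [Finset.mem_image, Finset.mem_filter, Finset.mem_univ, true_and] at ha ⊢
      obtain ⟨y, hyA, hya⟩ := ha
      obtain ⟨w, hw⟩ := hdc y b (by omega)
      have h2 := href w y (by omega)
      dsimp only at h2
      exact ⟨w, by omega, hw⟩
    have hrange := dclosed_eq_range hdcl
    have : i ∈ (Finset.univ.filter (fun y : Fin m => g y.succ < g 0)).image f' := by
      rw [hrange]; simpa [jval] using hi
    simp only [Finset.mem_image] at this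
    obtain ⟨y, _, hy⟩ := this
    exact h y hy
  have hpj := jval_pj hdc href
  exact ⟨z, hz, (hpj z).2 (by omega)⟩

include hdc href in
lemma U_dc : DC (U g f') := by
  have hpj := jval_pj hdc href
  set j := jval g f' with hj
  intro x i hi
  by_cases hij : i < j
  · obtain ⟨y, hy, _⟩ := jval_attained hdc href i hij
    refine ⟨y.succ, ?_⟩
    simp only [U, dif_neg (Fin.succ_ne_zero y), Fin.pred_succ, hy]
    split_ifs <;> omega
  · by_cases hij2 : i = j
    · exact ⟨0, by simp [U, hij2]; exact hj.symm⟩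
    · -- i > j
      have hx0 : x ≠ 0 := by
        rintro rfl; simp [U] at hi; omega
      simp only [U, dif_neg hx0] at hi
      have hvi : i - 1 < f' (x.pred hx0) := by split_ifs at hi <;> omega
      obtain ⟨z, hz⟩ := hdc (x.pred hx0) (i-1) hvi
      refine ⟨z.succ, ?_⟩
      simp only [U, dif_neg (Fin.succ_ne_zero z), Fin.pred_succ, hz]
      split_ifs <;> omega

include hdc href in
lemma U_ref : Ref (U g f') g := by
  have hpj := jval_pj hdc href
  intro x y hxy
  rcases eq_or_ne x 0 with rfl | hx0 <;> rcases eq_or_ne y 0 with rfl | hy0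
  · exact le_refl _
  · simp only [U, dif_pos rfl, dif_neg hy0] at hxy
    have hv : jval g f' ≤ f' (y.pred hy0) := by split_ifs at hxy <;> omega
    have := (hpj (y.pred hy0)).2
    have hgy : ¬ g (y.pred hy0).succ < g 0 := by
      intro h
      have := (hpj (y.pred hy0)).1 h
      omega
    rw [Fin.succ_pred] at hgy
    omega
  · simp only [U, dif_pos rfl, dif_neg hx0] at hxy
    have hv : f' (x.pred hx0) < jval g f' := by split_ifs at hxy <;> omega
    have hgx := (hpj (x.pred hx0)).2 hv
    rw [Fin.succ_pred] at hgx
    omega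
  · simp only [U, dif_neg hx0, dif_neg hy0] at hxy
    have : f' (x.pred hx0) ≤ f' (y.pred hy0) := by split_ifs at hxy <;> omega
    have h2 := href _ _ this
    dsimp only at h2
    rw [Fin.succ_pred, Fin.succ_pred] at h2
    exact h2

lemma U_sing : Sing (U g f') := by
  intro x hx
  by_contra hx0
  simp only [U, dif_neg hx0, dif_pos rfl] at hx
  split_ifs at hx <;> omega

include hdc href in
lemma U_fst : Fst (U g f') g := by
  have hpj := jval_pj hdc href
  intro y hy
  have hy0 : y ≠ 0 := by rintro rfl; omega
  simp only [U, dif_pos rfl, dif_neg hy0] at hy ⊢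
  have hv : f' (y.pred hy0) < jval g f' := by split_ifs at hy <;> omega
  have := (hpj (y.pred hy0)).1
  have hgy := (hpj (y.pred hy0)).2 hv
  rw [Fin.succ_pred] at hgy
  exact hgy

lemma D_U : D (U g f') = f' := by
  funext y
  have h0 : U g f' 0 = jval g f' := by simp [U]
  simp only [D, h0, U, dif_neg (Fin.succ_ne_zero y), Fin.pred_succ]
  split_ifs <;> omega

include hdc href in
lemma U_sup (hm : 1 ≤ m) : Finset.univ.sup (U g f') = Finset.univ.sup f' + 1 := by
  have hpj := jval_pj hdc href
  set j := jval g f' with hj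
  set s := Finset.univ.sup f' with hs
  have hjs : j ≤ s + 1 := by
    by_contra h
    obtain ⟨y, hy, _⟩ := jval_attained hdc href (s+1) (by omega)
    have := Finset.le_sup (f := f') (Finset.mem_univ y)
    omega
  apply le_antisymm
  · apply Finset.sup_le
    intro x _
    rcases eq_or_ne x 0 with rfl | hx0
    · simp [U]; omega
    · simp only [U, dif_neg hx0]
      have := Finset.le_sup (f := f') (Finset.mem_univ (x.pred hx0))
      split_ifs <;> omega
  · obtain ⟨z, hz⟩ := exists_sup hm f'
    by_cases hzj : j ≤ f' z
    · have : U g f' z.succ = s + 1 := by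
        simp only [U, dif_neg (Fin.succ_ne_zero z), Fin.pred_succ]
        split_ifs <;> omega
      have := this ▸ Finset.le_sup (f := U g f') (Finset.mem_univ z.succ)
      omega
    · have hjs' : j = s + 1 := by omega
      have : U g f' 0 = s + 1 := by simp [U, ← hj, hjs']
      have := this ▸ Finset.le_sup (f := U g f') (Finset.mem_univ (0 : Fin (m+1)))
      omega

end Ulemmas
end EP

namespace EP
set_option linter.unusedSectionVars false

lemma DC.mem_piFinset' {n : ℕ} {f : Fin n → ℕ} (h : DC f) :
    f ∈ Fintype.piFinset (fun _ : Fin n => Finset.range n) := h.mem_piFinset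

lemma main : ∀ (n : ℕ), 1 ≤ n → ∀ g : Fin n → ℕ,
    (∑ f ∈ Fintype.piFinset (fun _ : Fin n => Finset.range n),
      if DC f ∧ Ref f g then (-1:ℤ)^(1 + Finset.univ.sup f) else 0) = (-1)^n := by
  intro n
  induction n with
  | zero => omega
  | succ m IH =>
    intro _ g
    rcases Nat.eq_zero_or_pos m with rfl | hm
    · -- base case n = 1
      have hone : Fintype.piFinset (fun _ : Fin 1 => Finset.range 1) = {fun _ => 0} := by
        ext f
        simp only [Fintype.mem_piFinset, Finset.mem_range, Nat.lt_one_iff,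
          Finset.mem_singleton, funext_iff]
      rw [hone, Finset.sum_singleton]
      have hdc : DC (fun _ : Fin 1 => 0) := by intro x j hj; exact absurd hj (by simp)
      have href : Ref (fun _ : Fin 1 => 0) g := by
        intro x y _; rw [Fin.fin_one_eq_zero x, Fin.fin_one_eq_zero y]
      rw [if_pos ⟨hdc, href⟩]
      simp
    · -- inductive step, m ≥ 1
      set F := Fintype.piFinset (fun _ : Fin (m+1) => Finset.range (m+1)) with hF
      set term : (Fin (m+1) → ℕ) → ℤ :=
        fun f => if DC f ∧ Ref f g then (-1:ℤ)^(1 + Finset.univ.sup f) else 0 with hterm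
      set P : (Fin (m+1) → ℕ) → Prop :=
        fun f => (DC f ∧ Ref f g) ∧ Sing f ∧ Fst f g with hP
      have hsplit := Finset.sum_filter_add_sum_filter_not F P term
      set invol : (Fin (m+1) → ℕ) → (Fin (m+1) → ℕ) :=
        fun f => if DC f ∧ Ref f g then (if Sing f then M f else T f) else f with hinvol
      have hIM : ∀ f : Fin (m+1) → ℕ, DC f ∧ Ref f g → Sing f → invol f = M f := by
        intro f hg hs; rw [hinvol]; simp only [if_pos hg, if_pos hs]
      have hIT : ∀ f : Fin (m+1) → ℕ, DC f ∧ Ref f g → ¬ Sing f → invol f = T f := by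
        intro f hg hs; rw [hinvol]; simp only [if_pos hg, if_neg hs]
      have hIN : ∀ f : Fin (m+1) → ℕ, ¬ (DC f ∧ Ref f g) → invol f = f := by
        intro f hg; rw [hinvol]; simp only [if_neg hg]
      have hinv : (∑ f ∈ F.filter (fun f => ¬ P f), term f) = 0 := by
        apply Finset.sum_involution (g := fun f _ => invol f)
        case hg₁ =>
          intro f hf
          simp only [Finset.mem_filter, hP] at hf
          by_cases hgood : DC f ∧ Ref f g
          · obtain ⟨hdc, href⟩ := hgood
            by_cases hsing : Sing f
            · have hnf : ¬ Fst f g := by tauto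
              have h1 : DC (M f) ∧ Ref (M f) g := ⟨M_dc hdc, M_ref hdc href hsing hnf⟩
              rw [hIM f ⟨hdc, href⟩ hsing, hterm]
              simp only [if_pos (⟨hdc, href⟩ : DC f ∧ Ref f g), if_pos h1]
              rw [← M_sup hdc href hsing hnf]
              ring
            · have h1 : DC (T f) ∧ Ref (T f) g := ⟨T_dc hdc hsing, T_ref href⟩
              rw [hIT f ⟨hdc, href⟩ hsing, hterm]
              simp only [if_pos (⟨hdc, href⟩ : DC f ∧ Ref f g), if_pos h1]
              rw [T_sup (Nat.le_add_left 1 m)]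
              ring
          · rw [hIN f hgood, hterm]
            simp only [if_neg hgood]
            ring
        case hg₃ =>
          intro f hf hne
          simp only [Finset.mem_filter, hP] at hf
          by_cases hgood : DC f ∧ Ref f g
          · obtain ⟨hdc, href⟩ := hgood
            by_cases hsing : Sing f
            · have hnf : ¬ Fst f g := by tauto
              rw [hIM f ⟨hdc, href⟩ hsing]
              obtain ⟨h00, -⟩ := prev_block hdc href hnf
              intro hMf
              have h2 := congrFun hMf 0
              simp only [M] at h2
              split_ifs at h2 <;> omega
            · rw [hIT f ⟨hdc, href⟩ hsing]
              intro hTf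
              have h2 := congrFun hTf 0
              have h3 : T f 0 = f 0 + 1 := by simp [T]
              omega
          · exfalso; apply hne; rw [hterm]; simp only [if_neg hgood]
        case g_mem =>
          intro f hf
          simp only [Finset.mem_filter, hP] at hf ⊢
          by_cases hgood : DC f ∧ Ref f g
          · obtain ⟨hdc, href⟩ := hgood
            by_cases hsing : Sing f
            · have hnf : ¬ Fst f g := by tauto
              rw [hIM f ⟨hdc, href⟩ hsing]
              refine ⟨(M_dc hdc).mem_piFinset, ?_⟩
              intro hPM
              exact M_not_sing hdc href hsing hnf hPM.2.1
            · rw [hIT f ⟨hdc, href⟩ hsing]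
              refine ⟨(T_dc hdc hsing).mem_piFinset, ?_⟩
              intro hPT
              exact T_not_fst href hsing hPT.2.2
          · rw [hIN f hgood]
            exact ⟨hf.1, fun hPf => hgood hPf.1⟩
        case hg₄ =>
          intro f hf
          by_cases hgood : DC f ∧ Ref f g
          · obtain ⟨hdc, href⟩ := hgood
            simp only [Finset.mem_filter, hP] at hf
            by_cases hsing : Sing f
            · have hnf : ¬ Fst f g := by tauto
              rw [hIM f ⟨hdc, href⟩ hsing]
              have h1 : DC (M f) ∧ Ref (M f) g := ⟨M_dc hdc, M_ref hdc href hsing hnf⟩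
              rw [hIT (M f) h1 (M_not_sing hdc href hsing hnf)]
              exact T_M hdc href hsing hnf
            · rw [hIT f ⟨hdc, href⟩ hsing]
              have h1 : DC (T f) ∧ Ref (T f) g := ⟨T_dc hdc hsing, T_ref href⟩
              rw [hIM (T f) h1 (T_sing (f := f))]
              exact M_T
          · rw [hIN f hgood, hIN f hgood]
      have hfix : (∑ f ∈ F.filter P, term f) = (-1:ℤ)^(m+1) := by
        have hbij : (∑ f ∈ F.filter P, term f)
            = ∑ f' ∈ (Fintype.piFinset (fun _ : Fin m => Finset.range m)).filter
                (fun f' => DC f' ∧ Ref f' (fun y => g y.succ)),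
              (-(-1:ℤ)^(1 + Finset.univ.sup f')) := by
          apply Finset.sum_bij' (i := fun f _ => D f) (j := fun f' _ => U g f')
          case hi =>
            intro f hf
            simp only [Finset.mem_filter, hP] at hf
            obtain ⟨-, ⟨hdc, href⟩, hsing, hfst⟩ := hf
            simp only [Finset.mem_filter]
            exact ⟨(D_dc hdc hsing).mem_piFinset, D_dc hdc hsing, D_ref href hsing⟩
          case hj =>
            intro f' hf'
            simp only [Finset.mem_filter] at hf'
            obtain ⟨-, hdc, href⟩ := hf'
            simp only [Finset.mem_filter, hP]
            exact ⟨(U_dc hdc href).mem_piFinset,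
              ⟨U_dc hdc href, U_ref hdc href⟩, U_sing, U_fst hdc href⟩
          case left_neg =>
            intro f hf
            simp only [Finset.mem_filter, hP] at hf
            obtain ⟨-, ⟨hdc, href⟩, hsing, hfst⟩ := hf
            exact U_D hdc href hsing hfst
          case right_neg =>
            intro f' hf'
            exact D_U
          case h =>
            intro f hf
            simp only [Finset.mem_filter, hP] at hf
            obtain ⟨-, ⟨hdc, href⟩, hsing, hfst⟩ := hf
            rw [hterm]
            simp only [if_pos (⟨hdc, href⟩ : DC f ∧ Ref f g)]
            rw [← D_sup hdc hsing hm]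
            ring
        rw [hbij, Finset.sum_neg_distrib, Finset.sum_filter,
          IH hm (fun y => g y.succ)]
        ring
      rw [← hsplit, hinv, hfix]
      ring

end EP

namespace EP
set_option linter.unusedSectionVars false

open Surjs in
noncomputable def toSurj (n : ℕ) (hn : 1 ≤ n) (f : Fin n → ℕ) (hdc : DC f) : Surjs n := by
  refine ⟨⟨⟨Finset.univ.sup f + 1, ?_⟩, fun x => ⟨f x, ?_⟩⟩, ?_⟩
  · -- sup f + 1 < n + 1
    obtain ⟨y, hy⟩ := exists_sup hn f
    have := hdc.lt y
    show Finset.univ.sup f + 1 < n + 1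
    omega
  · have := Finset.le_sup (f := f) (Finset.mem_univ x)
    show f x < Finset.univ.sup f + 1
    omega
  · rintro ⟨i, hi⟩
    obtain ⟨y, hy⟩ := exists_sup hn f
    have hi' : i < Finset.univ.sup f + 1 := hi
    by_cases his : i = Finset.univ.sup f
    · refine ⟨y, ?_⟩
      apply Fin.ext
      show f y = i
      omega
    · obtain ⟨z, hz⟩ := hdc y i (by omega)
      refine ⟨z, ?_⟩
      apply Fin.ext
      show f z = i
      exact hz

open Surjs in
lemma surj_k_eq (n : ℕ) (hn : 1 ≤ n) (o : Surjs n) :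
    o.k = 1 + Finset.univ.sup (fun x => (o.f x : ℕ)) := by
  have hk1 : 1 ≤ o.k := by
    have x0 : Fin n := ⟨0, hn⟩
    have := (o.f x0).isLt
    omega
  have hkk : ((o.1.1 : Fin (n+1)) : ℕ) = o.k := rfl
  obtain ⟨z, hz⟩ := o.2 ⟨o.k - 1, by rw [hkk]; omega⟩
  have hzval : (o.f z : ℕ) = o.k - 1 := by
    simp only [Surjs.f, hz]
  have hle : ∀ x, (o.f x : ℕ) ≤ o.k - 1 := by
    intro x
    have := (o.f x).isLt
    omega
  have h1 : Finset.univ.sup (fun x => (o.f x : ℕ)) = o.k - 1 := by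
    apply le_antisymm
    · exact Finset.sup_le (fun x _ => hle x)
    · exact hzval ▸ Finset.le_sup (f := fun x => (o.f x : ℕ)) (Finset.mem_univ z)
  omega

theorem euler_poincare_aux (n : ℕ) (hn : 1 ≤ n) (p : Surjs n) :
    (∑ o : Surjs n, if o.Refines p then ((-1 : ℤ) ^ o.k) else 0) = (-1 : ℤ) ^ n := by
  classical
  set g : Fin n → ℕ := fun x => (p.f x : ℕ) with hg
  rw [← main n hn g]
  rw [← Finset.sum_filter, ← Finset.sum_filter]
  apply Finset.sum_bij (i := fun o _ => fun x => ((Surjs.f o) x : ℕ))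
  case hi =>
    intro o ho
    simp only [Finset.mem_filter, Finset.mem_univ, true_and] at ho
    have hdc : DC (fun x => ((Surjs.f o) x : ℕ)) := by
      intro x j hj
      dsimp only at hj
      have hjk : j < o.k := by
        have := ((Surjs.f o) x).isLt
        omega
      obtain ⟨y, hy⟩ := o.2 ⟨j, hjk⟩
      refine ⟨y, ?_⟩
      show ((Surjs.f o y : Fin o.k) : ℕ) = j
      simp only [Surjs.f, hy]
    refine Finset.mem_filter.2 ⟨hdc.mem_piFinset, hdc, ?_⟩
    intro x y hxy
    exact ho x y (Fin.le_def.2 hxy)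
  case i_inj =>
    intro o₁ h₁ o₂ h₂ heq
    have hk : o₁.k = o₂.k := by
      rw [surj_k_eq n hn o₁, surj_k_eq n hn o₂, heq]
    obtain ⟨⟨k₁, f₁⟩, hs₁⟩ := o₁
    obtain ⟨⟨k₂, f₂⟩, hs₂⟩ := o₂
    have hk' : k₁ = k₂ := Fin.ext hk
    subst hk'
    apply Subtype.ext
    simp only [Sigma.mk.inj_iff, heq_eq_eq, true_and]
    funext x
    apply Fin.ext
    exact congrFun heq x
  case i_surj =>
    intro f hf
    simp only [Finset.mem_filter] at hf
    obtain ⟨hmem, hdc, href⟩ := hf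
    refine ⟨toSurj n hn f hdc, ?_, ?_⟩
    · simp only [Finset.mem_filter, Finset.mem_univ, true_and]
      intro x y hxy
      rw [Fin.le_def] at hxy ⊢
      exact href x y hxy
    · funext x
      rfl
  case h =>
    intro o ho
    exact congrArg (fun t => (-1 : ℤ) ^ t) (surj_k_eq n hn o)
end EP


/-- Euler–Poincaré relation for the face of the permutahedron corresponding to `p`:
the alternating sum of `(-1)^{k(o)}` over the surjections `o` refining `p` is `(-1)^n`. -/
theorem euler_poincare_permutahedron (n : ℕ) (hn : 1 ≤ n) (p : Surjs n) :
    (∑ o : Surjs n, if o.Refines p then ((-1 : ℤ) ^ o.k) else 0) = (-1 : ℤ) ^ n :=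
  EP.euler_poincare_aux n hn p
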